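/- Assume ℓ^† < kα < h^†, h > ℓ, and α > 0, and for σ > 0 define γ(σ) = sqrt(1 + 8ασ²/(h−ℓ)²) and the expansion threshold θ̄(σ) = −(γ(σ)+1)(ℓ^†−kα)/((γ(σ)−1)(h^†−kα) − (γ(σ)+1)(ℓ^†−kα)). Then θ̄ is strictly decreasing on (0,∞), (kα−ℓ^†)/(h^†−ℓ^†) < θ̄(σ) < 1 for every σ > 0, θ̄(σ) → 1 as σ → 0⁺, and θ̄(σ) → (kα−ℓ^†)/(h^†−ℓ^†) as σ → ∞. -/

import Mathlib

open Real Filter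

/-- The expansion threshold
`θ̄(σ) = -(γ(σ)+1)(ℓ†-kα)/((γ(σ)-1)(h†-kα) - (γ(σ)+1)(ℓ†-kα))` is strictly
decreasing in `σ` on `(0,∞)`, satisfies `(kα-ℓ†)/(h†-ℓ†) < θ̄(σ) < 1` for each
`σ > 0`, tends to `1` as `σ → 0⁺`, and tends to `(kα-ℓ†)/(h†-ℓ†)` as `σ → ∞`. -/
theorem stmt_16 (h ℓ α hd ld k : ℝ) (hhl : ℓ < h) (hα : 0 < α)
    (hld : ld < k * α) (hhd : k * α < hd)
    (γ θ : ℝ → ℝ)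
    (hγ : ∀ σ : ℝ, γ σ = Real.sqrt (1 + 8 * α * σ ^ 2 / (h - ℓ) ^ 2))
    (hθ : ∀ σ : ℝ, θ σ = -(γ σ + 1) * (ld - k * α) /
      ((γ σ - 1) * (hd - k * α) - (γ σ + 1) * (ld - k * α))) :
    StrictAntiOn θ (Set.Ioi 0) ∧
    (∀ σ : ℝ, 0 < σ → (k * α - ld) / (hd - ld) < θ σ ∧ θ σ < 1) ∧
    Tendsto θ (nhdsWithin 0 (Set.Ioi 0)) (nhds 1) ∧
    Tendsto θ atTop (nhds ((k * α - ld) / (hd - ld))) := by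
  set A : ℝ := k * α - ld with hAdef
  set B : ℝ := hd - k * α with hBdef
  have hhl2 : (0:ℝ) < (h - ℓ) ^ 2 := by nlinarith
  have hA0 : 0 < A := by rw [hAdef]; linarith
  have hB0 : 0 < B := by rw [hBdef]; linarith
  have hABd : hd - ld = A + B := by rw [hAdef, hBdef]; ring
  have hθ' : ∀ σ : ℝ, θ σ = (A * γ σ + A) / ((A + B) * γ σ + (A - B)) := by
    intro σ
    rw [hθ σ, hAdef, hBdef]
    ring_nf
  have hγ1 : ∀ σ : ℝ, 0 < σ → 1 < γ σ := by
    intro σ hσ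
    rw [hγ σ]
    have h1 : (1:ℝ) = Real.sqrt 1 := by simp
    rw [h1]
    apply Real.sqrt_lt_sqrt (by norm_num)
    have : 0 < 8 * α * σ ^ 2 / (h - ℓ) ^ 2 := div_pos (by positivity) hhl2
    linarith
  have hden : ∀ x : ℝ, 1 ≤ x → 0 < (A + B) * x + (A - B) := by
    intro x hx; nlinarith
  have gkey : ∀ x y : ℝ, 1 ≤ x → x < y →
      (A * y + A) / ((A + B) * y + (A - B)) < (A * x + A) / ((A + B) * x + (A - B)) := by
    intro x y hx hxy
    rw [div_lt_div_iff₀ (hden y (by linarith)) (hden x hx)]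
    nlinarith [mul_pos hA0 (mul_pos hB0 (sub_pos.mpr hxy))]
  have hγmono : ∀ x y : ℝ, 0 < x → x < y → γ x < γ y := by
    intro x y hx hxy
    rw [hγ x, hγ y]
    apply Real.sqrt_lt_sqrt (by positivity)
    have key : 8 * α * y ^ 2 / (h - ℓ) ^ 2 - 8 * α * x ^ 2 / (h - ℓ) ^ 2
        = (8 * α * y ^ 2 - 8 * α * x ^ 2) / (h - ℓ) ^ 2 := by ring
    have hp : 0 < (8 * α * y ^ 2 - 8 * α * x ^ 2) / (h - ℓ) ^ 2 :=
      div_pos (by nlinarith [mul_pos hα (mul_pos (add_pos hx (hx.trans hxy)) (sub_pos.mpr hxy))]) hhl2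
    linarith
  refine ⟨?_, ?_, ?_, ?_⟩
  · intro x hx y hy hxy
    rw [hθ' x, hθ' y]
    exact gkey (γ x) (γ y) (le_of_lt (hγ1 x hx)) (hγmono x y hx hxy)
  · intro σ hσ
    have hx := hγ1 σ hσ
    have hd1 := hden (γ σ) (le_of_lt hx)
    constructor
    · rw [hABd, hθ' σ, div_lt_div_iff₀ (by linarith) hd1]
      nlinarith
    · rw [hθ' σ, div_lt_one hd1]
      nlinarith
  · have hγ0 : Tendsto γ (nhdsWithin 0 (Set.Ioi 0)) (nhds 1) := by
      have hc : Tendsto (fun σ : ℝ => Real.sqrt (1 + 8 * α * σ ^ 2 / (h - ℓ) ^ 2))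
          (nhdsWithin 0 (Set.Ioi 0)) (nhds 1) := by
        have hc0 : ContinuousAt (fun σ : ℝ => Real.sqrt (1 + 8 * α * σ ^ 2 / (h - ℓ) ^ 2)) 0 := by
          apply Real.continuous_sqrt.continuousAt.comp
          fun_prop
        have h0 : Real.sqrt (1 + 8 * α * (0:ℝ) ^ 2 / (h - ℓ) ^ 2) = 1 := by
          norm_num
        have := (hc0.continuousWithinAt (s := Set.Ioi 0)).tendsto
        simpa [h0] using this
      exact hc.congr (fun σ => (hγ σ).symm)
    have hnum : Tendsto (fun σ => A * γ σ + A) (nhdsWithin 0 (Set.Ioi 0)) (nhds (2 * A)) := by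
      have := (hγ0.const_mul A).add_const A
      convert this using 2
      ring
    have hden' : Tendsto (fun σ => (A + B) * γ σ + (A - B)) (nhdsWithin 0 (Set.Ioi 0))
        (nhds (2 * A)) := by
      have := (hγ0.const_mul (A + B)).add_const (A - B)
      convert this using 2
      ring
    have hlim := hnum.div hden' (by positivity)
    rw [div_self (by positivity : (2:ℝ) * A ≠ 0)] at hlim
    exact Tendsto.congr (fun σ => (hθ' σ).symm) hlim
  · have hγtop : Tendsto γ atTop atTop := by
      have hu : Tendsto (fun σ : ℝ => 1 + 8 * α * σ ^ 2 / (h - ℓ) ^ 2) atTop atTop := by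
        apply tendsto_atTop_add_const_left
        have h2 : Tendsto (fun σ : ℝ => σ ^ 2 * (8 * α / (h - ℓ) ^ 2)) atTop atTop := by
          apply Tendsto.atTop_mul_const (by positivity)
          exact tendsto_pow_atTop (by norm_num)
        refine h2.congr (fun σ => by ring)
      rw [tendsto_atTop] at hu ⊢
      intro b
      filter_upwards [hu (max 0 b ^ 2)] with σ h1
      rw [hγ σ]
      calc b ≤ max 0 b := le_max_right 0 b
        _ = Real.sqrt (max 0 b ^ 2) := (Real.sqrt_sq (le_max_left 0 b)).symm
        _ ≤ _ := Real.sqrt_le_sqrt h1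
    have hinv : Tendsto (fun σ => (γ σ)⁻¹) atTop (nhds 0) := hγtop.inv_tendsto_atTop
    have hnum : Tendsto (fun σ => A + A * (γ σ)⁻¹) atTop (nhds A) := by
      have := (hinv.const_mul A).const_add A
      simpa using this
    have hden' : Tendsto (fun σ => (A + B) + (A - B) * (γ σ)⁻¹) atTop (nhds (A + B)) := by
      have := (hinv.const_mul (A - B)).const_add (A + B)
      simpa using this
    have hlim := hnum.div hden' (by positivity)
    rw [hABd]
    refine Tendsto.congr' ?_ hlim
    filter_upwards [eventually_gt_atTop (0:ℝ)] with σ hσ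
    have hx := hγ1 σ hσ
    have hxne : γ σ ≠ 0 := by linarith
    have hd1 := hden (γ σ) (le_of_lt hx)
    rw [hθ' σ]
    simp only [Pi.div_apply]
    field_simp
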